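/- Let A be a positively graded finite-dimensional algebra over an algebraically closed field K such that λ ↦ λ' is an involution on Λ₀, where each graded projective cover P^λ = ⊕_{i=0}^{d_λ} P^λ_i with P^λ_{d_λ} ≠ 0. For λ, μ ∈ Λ₀ and a nonzero homogeneous homomorphism f ∈ Hom_A(P^λ, P^μ) of degree j, there exist homogeneous g ∈ Hom_A(P^μ, P^{λ'}) of degree d_{λ'} − j and homogeneous h ∈ Hom_A(P^{μ'}, P^λ) of degree d_μ − j such that g∘f = θ_λ and f∘h = θ_{μ'}. -/

import Mathlib

/-- The socle of a module: the largest semisimple submodule. -/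
def Socle (A M : Type) [Ring A] [AddCommGroup M] [Module A M] : Submodule A M :=
  ⨆ (p : Submodule A M) (_ : IsSimpleModule A ↥p), p

/-- The radical of a module: the intersection of all maximal submodules. -/
def Rad (A M : Type) [Ring A] [AddCommGroup M] [Module A M] : Submodule A M :=
  sInf {p : Submodule A M | IsCoatom p}

/-- `f` is a homogeneous map of degree `j` with respect to the gradings `ℳ`, `𝒩`. -/
def IsHomogMap {K M N : Type} [Field K] [AddCommGroup M] [Module K M]
    [AddCommGroup N] [Module K N]
    (ℳ : ℤ → Submodule K M) (𝒩 : ℤ → Submodule K N) (j : ℤ) (f : M → N) : Prop :=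
  ∀ i : ℤ, ∀ m ∈ ℳ i, f m ∈ 𝒩 (i + j)

open DirectSum

/-- Projections onto graded components commute with homogeneous additive maps. -/
lemma projComm {K M N : Type} [Field K] [AddCommGroup M] [Module K M]
    [AddCommGroup N] [Module K N]
    (ℳ : ℤ → Submodule K M) (𝒩 : ℤ → Submodule K N)
    [DirectSum.Decomposition ℳ] [DirectSum.Decomposition 𝒩]
    (φ : M → N) (hadd : ∀ x y, φ (x + y) = φ x + φ y) (hzero : φ 0 = 0)
    (j : ℤ) (hφ : ∀ i : ℤ, ∀ x ∈ ℳ i, φ x ∈ 𝒩 (i + j))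
    (s : ℤ) (z : M) :
    ((DirectSum.decompose 𝒩 (φ z)) (s + j) : N) = φ ((DirectSum.decompose ℳ z) s : M) := by
  induction z using DirectSum.Decomposition.inductionOn (ℳ := ℳ) with
  | zero =>
      simp [hzero]
  | homogeneous xh =>
      rename_i t
      obtain ⟨x, hx⟩ := xh
      show ((DirectSum.decompose 𝒩 (φ x)) (s + j) : N) = φ ((DirectSum.decompose ℳ x) s : M)
      by_cases hst : s = t
      · subst hst
        rw [DirectSum.decompose_of_mem_same 𝒩 (hφ s x hx),
          DirectSum.decompose_of_mem_same ℳ hx]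
      · rw [DirectSum.decompose_of_mem_ne 𝒩 (hφ t x hx) (by omega : t + j ≠ s + j),
          DirectSum.decompose_of_mem_ne ℳ hx (Ne.symm hst), hzero]
  | add a b ha hb =>
      rw [hadd, DirectSum.decompose_add, DirectSum.add_apply, Submodule.coe_add,
        DirectSum.decompose_add, DirectSum.add_apply, Submodule.coe_add, hadd, ha, hb]

/-- The homogeneous component of degree `δ` of an `A`-linear map between graded modules. -/
lemma homogComp_exists {K A : Type} [Field K] [Ring A] [Algebra K A]
    (𝒜 : ℤ → Submodule K A) [DirectSum.Decomposition 𝒜]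
    {M N : Type} [AddCommGroup M] [Module A M] [Module K M] [IsScalarTower K A M]
    [AddCommGroup N] [Module A N] [Module K N] [IsScalarTower K A N]
    (ℳ : ℤ → Submodule K M) (𝒩 : ℤ → Submodule K N)
    [DirectSum.Decomposition ℳ] [DirectSum.Decomposition 𝒩]
    (hM : ∀ i j : ℤ, ∀ a ∈ 𝒜 i, ∀ x ∈ ℳ j, a • x ∈ ℳ (i + j))
    (hN : ∀ i j : ℤ, ∀ a ∈ 𝒜 i, ∀ x ∈ 𝒩 j, a • x ∈ 𝒩 (i + j))
    (g : M →ₗ[A] N) (δ : ℤ) :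
    ∃ g' : M →ₗ[A] N,
      (∀ i : ℤ, ∀ y ∈ ℳ i, g' y ∈ 𝒩 (i + δ)) ∧
      (∀ i : ℤ, ∀ y ∈ ℳ i, g' y = ((DirectSum.decompose 𝒩 (g y)) (i + δ) : N)) := by
  classical
  let gK : M →ₗ[K] N :=
    (DirectSum.toModule K ℤ N fun i =>
      ((𝒩 (i + δ)).subtype ∘ₗ (DirectSum.component K ℤ (fun t => ↥(𝒩 t)) (i + δ)) ∘ₗ
          (DirectSum.decomposeLinearEquiv 𝒩).toLinearMap) ∘ₗ
        ((g.restrictScalars K) ∘ₗ (ℳ i).subtype)) ∘ₗ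
      (DirectSum.decomposeLinearEquiv ℳ).toLinearMap
  have hgK : ∀ i : ℤ, ∀ y ∈ ℳ i, gK y = ((DirectSum.decompose 𝒩 (g y)) (i + δ) : N) := by
    intro i y hy
    show DirectSum.toModule K ℤ N _ (DirectSum.decompose ℳ y) = _
    rw [DirectSum.decompose_of_mem ℳ hy, ← DirectSum.lof_eq_of K, DirectSum.toModule_lof]
    rfl
  have smul_proj : ∀ (k : ℤ) (a : A), a ∈ 𝒜 k → ∀ (s : ℤ) (z : N),
      ((DirectSum.decompose 𝒩 (a • z)) (s + k) : N) = a • ((DirectSum.decompose 𝒩 z) s : N) := by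
    intro k a ha s z
    exact projComm 𝒩 𝒩 (fun z => a • z) (fun x y => smul_add a x y) (smul_zero a) k
      (fun t x hx => by rw [add_comm t k]; exact hN k t a ha x hx) s z
  have hsmul : ∀ (y : M) (a : A), gK (a • y) = a • gK y := by
    intro y
    induction y using DirectSum.Decomposition.inductionOn (ℳ := ℳ) with
    | zero => intro a; rw [smul_zero, map_zero, smul_zero]
    | add u v hu hv => intro a; rw [smul_add, map_add, hu, hv, map_add, smul_add]
    | homogeneous xh =>
        rename_i i
        obtain ⟨y, hy⟩ := xh
        intro a
        show gK (a • y) = a • gK y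
        induction a using DirectSum.Decomposition.inductionOn (ℳ := 𝒜) with
        | zero => rw [zero_smul, map_zero, zero_smul]
        | add a b ha hb => rw [add_smul, map_add, ha, hb, add_smul]
        | homogeneous ah =>
            rename_i k
            obtain ⟨a, hak⟩ := ah
            show gK (a • y) = a • gK y
            rw [hgK (k + i) (a • y) (hM k i a hak y hy), hgK i y hy, map_smul]
            have h1 := smul_proj k a hak (i + δ) (g y)
            have h2 : k + i + δ = i + δ + k := by ring
            rw [h2]
            exact h1
  refine ⟨{ toFun := gK, map_add' := gK.map_add, map_smul' := fun a y => hsmul y a }, ?_, ?_⟩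
  · intro i y hy
    show gK y ∈ 𝒩 (i + δ)
    rw [hgK i y hy]
    exact SetLike.coe_mem _
  · intro i y hy
    exact hgK i y hy

/-- Transport along an equality of indices, as a linear equivalence. -/
def castLEquiv {A : Type} [Ring A] {Lam : Type} (P : Lam → Type)
    [∀ l, AddCommGroup (P l)] [∀ l, Module A (P l)] {n m : Lam} (e : n = m) :
    P n ≃ₗ[A] P m :=
  Eq.recOn (motive := fun x _ => P n ≃ₗ[A] P x) e (LinearEquiv.refl A (P n))

lemma castLEquiv_apply {A : Type} [Ring A] {Lam : Type} (P : Lam → Type)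
    [∀ l, AddCommGroup (P l)] [∀ l, Module A (P l)] {n m : Lam} (e : n = m) (x : P n) :
    castLEquiv (A := A) P e x = cast (congrArg P e) x := by
  subst e; rfl

lemma castLEquiv_map_socle {A : Type} [Ring A] {Lam : Type} (P : Lam → Type)
    [∀ l, AddCommGroup (P l)] [∀ l, Module A (P l)] {n m : Lam} (e : n = m) :
    Submodule.map (castLEquiv (A := A) P e).toLinearMap (Socle A (P n)) = Socle A (P m) := by
  subst e
  rw [show castLEquiv (A := A) P rfl = LinearEquiv.refl A (P n) from rfl]
  simp

lemma castLEquiv_mem {K A : Type} [Field K] [Ring A] {Lam : Type} (P : Lam → Type)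
    [∀ l, AddCommGroup (P l)] [∀ l, Module A (P l)] [∀ l, Module K (P l)]
    (Pgr : ∀ l, ℤ → Submodule K (P l)) {n m : Lam} (e : n = m) (t : ℤ) (y : P n)
    (hy : y ∈ Pgr n t) : (castLEquiv (A := A) P e y) ∈ Pgr m t := by
  subst e; exact hy

/-- Graded version of Statement 1.  For a positively graded finite-dimensional
algebra `A` with `λ ↦ λ'` an involution on `Λ₀`, graded projective covers
`P^λ = ⊕_{i=0}^{d_λ} P^λ_i` with `P^λ_{d_λ} ≠ 0`, and a nonzero homogeneous
`f ∈ Hom_A(P^λ, P^μ)` of degree `j`, there exist homogeneous `g ∈ Hom_A(P^μ, P^{λ'})` of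
degree `d_{λ'} − j` and homogeneous `h ∈ Hom_A(P^{μ'}, P^λ)` of degree `d_μ − j` with
`g ∘ f = θ_λ` and `f ∘ h = θ_{μ'}`. -/
theorem stmt_6
    (K A : Type) [Field K] [IsAlgClosed K] [Ring A] [Algebra K A] [FiniteDimensional K A]
    -- positive grading on A
    (𝒜 : ℤ → Submodule K A)
    (hA : DirectSum.IsInternal 𝒜)
    (hA1 : (1 : A) ∈ 𝒜 0)
    (hAmul : ∀ i j : ℤ, ∀ a ∈ 𝒜 i, ∀ b ∈ 𝒜 j, a * b ∈ 𝒜 (i + j))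
    (hApos : ∀ i : ℤ, i < 0 → 𝒜 i = ⊥)
    (Lam : Type) (L P : Lam → Type)
    [∀ l, AddCommGroup (L l)] [∀ l, Module A (L l)] [∀ l, Module K (L l)]
    [∀ l, IsScalarTower K A (L l)] [∀ l, FiniteDimensional K (L l)]
    [∀ l, AddCommGroup (P l)] [∀ l, Module A (P l)] [∀ l, Module K (P l)]
    [∀ l, IsScalarTower K A (P l)] [∀ l, FiniteDimensional K (P l)]
    (hsimple : ∀ l, IsSimpleModule A (L l))
    (hdistinct : ∀ l m, Nonempty (L l ≃ₗ[A] L m) → l = m)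
    (hproj : ∀ l, Module.Projective A (P l))
    (hcover : ∀ l, ∃ π : P l →ₗ[A] L l, Function.Surjective π ∧ LinearMap.ker π = Rad A (P l))
    -- gradings on the projective covers, supported in degrees 0..d l
    (d : Lam → ℤ) (hd : ∀ l, 0 ≤ d l)
    (Pgr : ∀ l, ℤ → Submodule K (P l))
    (hP : ∀ l, DirectSum.IsInternal (Pgr l))
    (hPsmul : ∀ l, ∀ i j : ℤ, ∀ a ∈ 𝒜 i, ∀ x ∈ Pgr l j, a • x ∈ Pgr l (i + j))
    (hPsupp : ∀ l, ∀ i : ℤ, (i < 0 ∨ d l < i) → Pgr l i = ⊥)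
    (hPtop : ∀ l, Pgr l (d l) ≠ ⊥)
    -- the map ' on Λ₀, an involution, with soc(P^λ) ≅ L^{λ'}
    (pr : Lam → Lam)
    (hpr : ∀ l, Module.Injective A (P l) → Nonempty (↥(Socle A (P l)) ≃ₗ[A] L (pr l)))
    (hprinj : ∀ l, Module.Injective A (P l) → Module.Injective A (P (pr l)))
    (hprinv : ∀ l, Module.Injective A (P l) → pr (pr l) = l)
    -- the fixed maps θ_λ with image soc(P^{λ'}), homogeneous of degree d_{λ'}
    (θ : ∀ l, P l →ₗ[A] P (pr l))
    (hθ : ∀ l, Module.Injective A (P l) → LinearMap.range (θ l) = Socle A (P (pr l)))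
    (hθhom : ∀ l, Module.Injective A (P l) →
      IsHomogMap (Pgr l) (Pgr (pr l)) (d (pr l)) (θ l))
    (l m : Lam) (hl : Module.Injective A (P l)) (hm : Module.Injective A (P m))
    (j : ℤ) (f : P l →ₗ[A] P m) (hf : f ≠ 0)
    (hfhom : IsHomogMap (Pgr l) (Pgr m) j f) :
    (∃ g : P m →ₗ[A] P (pr l),
      IsHomogMap (Pgr m) (Pgr (pr l)) (d (pr l) - j) g ∧ g.comp f = θ l) ∧
    (∃ h : P (pr m) →ₗ[A] P l,
      IsHomogMap (Pgr (pr m)) (Pgr l) (d m - j) h ∧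
      ∀ x : P (pr m), f (h x) = cast (congrArg P (hprinv m hm)) (θ (pr m) x)) := by
  classical
  letI := hA.chooseDecomposition
  letI := (hP l).chooseDecomposition
  letI := (hP m).chooseDecomposition
  letI := (hP (pr l)).chooseDecomposition
  letI := (hP (pr m)).chooseDecomposition
  constructor
  · -- Part 1: the map g
    -- every coatom of Submodule A (P l) is the radical
    haveI hNoeth : IsNoetherian A (P l) := isNoetherian_of_tower K inferInstance
    haveI : IsCoatomic (Submodule A (P l)) :=
      isCoatomic_of_orderTop_gt_wellFounded hNoeth.wf
    obtain ⟨π0, hπ0s, hπ0k⟩ := hcover l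
    have hsimpquot : IsSimpleModule A (P l ⧸ Rad A (P l)) := by
      rw [← hπ0k]
      haveI := hsimple l
      exact IsSimpleModule.congr (π0.quotKerEquivOfSurjective hπ0s)
    have hRad : IsCoatom (Rad A (P l)) := isSimpleModule_iff_isCoatom.mp hsimpquot
    have coatom_eq : ∀ c : Submodule A (P l), IsCoatom c → c = Rad A (P l) := by
      intro c hc
      have hle : Rad A (P l) ≤ c := sInf_le hc
      rcases eq_or_lt_of_le hle with h | h
      · exact h.symm
      · exact absurd (hRad.2 c h) hc.1
    -- ker (θ l) is a coatom
    have hsoc1 : IsSimpleModule A ↥(Socle A (P (pr l))) := by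
      obtain ⟨e⟩ := hpr (pr l) (hprinj l hl)
      haveI := hsimple (pr (pr l))
      exact IsSimpleModule.congr e
    have hrange : IsSimpleModule A ↥(LinearMap.range (θ l)) := by
      rw [hθ l hl]; exact hsoc1
    have hkerθ : IsCoatom (LinearMap.ker (θ l)) := by
      haveI := hrange
      exact isSimpleModule_iff_isCoatom.mp (IsSimpleModule.congr (θ l).quotKerEquivRange)
    have hkerf_ne : LinearMap.ker f ≠ ⊤ := fun h => hf (LinearMap.ker_eq_top.mp h)
    have hkerf_le : LinearMap.ker f ≤ LinearMap.ker (θ l) := by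
      rcases eq_top_or_exists_le_coatom (LinearMap.ker f) with h | ⟨c, hc, hlec⟩
      · exact absurd h hkerf_ne
      · rw [coatom_eq c hc] at hlec
        rw [coatom_eq _ hkerθ]
        exact hlec
    -- extend θ l along f using injectivity of P (pr l)
    let e1 := f.quotKerEquivRange
    let θbar : ↥(LinearMap.range f) →ₗ[A] P (pr l) :=
      (Submodule.liftQ (LinearMap.ker f) (θ l) hkerf_le) ∘ₗ (e1.symm : _ →ₗ[A] _)
    obtain ⟨g0, hg0⟩ := (hprinj l hl).out (LinearMap.range f).subtype
      (Submodule.injective_subtype _) θbar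
    have hg0f : ∀ x : P l, g0 (f x) = θ l x := by
      intro x
      have h1 : f x = (LinearMap.range f).subtype ⟨f x, LinearMap.mem_range_self f x⟩ := rfl
      rw [h1, hg0]
      show Submodule.liftQ (LinearMap.ker f) (θ l) hkerf_le (e1.symm ⟨f x, _⟩) = θ l x
      rw [f.quotKerEquivRange_symm_apply_image x]
      exact Submodule.liftQ_apply _ _ _
    obtain ⟨g, hg_hom, hg_char⟩ := homogComp_exists 𝒜 (Pgr m) (Pgr (pr l))
      (hPsmul m) (hPsmul (pr l)) g0 (d (pr l) - j)
    refine ⟨g, hg_hom, ?_⟩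
    apply LinearMap.ext
    intro x
    induction x using DirectSum.Decomposition.inductionOn (ℳ := Pgr l) with
    | zero => simp
    | add u v hu hv => rw [map_add, map_add, hu, hv]
    | homogeneous xh =>
        rename_i i
        obtain ⟨x, hx⟩ := xh
        show g (f x) = θ l x
        rw [hg_char (i + j) (f x) (hfhom i x hx), hg0f x,
          show i + j + (d (pr l) - j) = i + d (pr l) by ring]
        exact DirectSum.decompose_of_mem_same _ (hθhom l hl i x hx)
  · -- Part 2: the map h
    haveI : IsArtinian A (P m) := isArtinian_of_tower K inferInstance
    haveI : IsAtomic (Submodule A (P m)) :=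
      isAtomic_of_orderBot_wellFounded_lt ((isArtinian_iff A (P m)).mp ‹_›)
    have hrange_ne : LinearMap.range f ≠ ⊥ := fun h => hf (LinearMap.range_eq_bot.mp h)
    have hsocm : IsSimpleModule A ↥(Socle A (P m)) := by
      obtain ⟨e⟩ := hpr m hm
      haveI := hsimple (pr m)
      exact IsSimpleModule.congr e
    have hsoc_atom : IsAtom (Socle A (P m)) := isSimpleModule_iff_isAtom.mp hsocm
    have hsoc_le : Socle A (P m) ≤ LinearMap.range f := by
      rcases eq_bot_or_exists_atom_le (LinearMap.range f) with h | ⟨a, ha, hale⟩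
      · exact absurd h hrange_ne
      · haveI : IsSimpleModule A ↥a := isSimpleModule_iff_isAtom.mpr ha
        have h1 : a ≤ Socle A (P m) := by
          unfold Socle
          exact le_iSup₂ (f := fun (p : Submodule A (P m)) (_ : IsSimpleModule A ↥p) => p) a ‹_›
        rcases eq_or_lt_of_le h1 with h2 | h2
        · rw [← h2]; exact hale
        · exact absurd (hsoc_atom.2 a h2) ha.1
    have e := hprinv m hm
    set C : P (pr (pr m)) ≃ₗ[A] P m := castLEquiv (A := A) P e with hC
    set θ' : P (pr m) →ₗ[A] P m := C.toLinearMap ∘ₗ θ (pr m) with hθ'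
    have hθ'x : ∀ x, θ' x = cast (congrArg P e) (θ (pr m) x) :=
      fun x => castLEquiv_apply (A := A) P e _
    have hθ'range : LinearMap.range θ' = Socle A (P m) := by
      rw [hθ', LinearMap.range_comp, hθ (pr m) (hprinj m hm)]
      exact castLEquiv_map_socle (A := A) P e
    have hθ'hom : IsHomogMap (Pgr (pr m)) (Pgr m) (d m) θ' := by
      intro i x hx
      have h1 := hθhom (pr m) (hprinj m hm) i x hx
      rw [show d (pr (pr m)) = d m from congrArg d e] at h1
      exact castLEquiv_mem (A := A) P Pgr e _ _ h1
    have hθ'le : LinearMap.range θ' ≤ LinearMap.range f := hθ'range ▸ hsoc_le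
    haveI := hproj (pr m)
    obtain ⟨h0, hh0⟩ := Module.projective_lifting_property f.rangeRestrict
      (θ'.codRestrict (LinearMap.range f) (fun x => hθ'le (LinearMap.mem_range_self θ' x)))
      f.surjective_rangeRestrict
    have hfh0 : ∀ x, f (h0 x) = θ' x := by
      intro x
      have h1 := congrArg (fun (u : P (pr m) →ₗ[A] ↥(LinearMap.range f)) => ((u x : _) : P m)) hh0
      simpa using h1
    obtain ⟨h, hh_hom, hh_char⟩ := homogComp_exists 𝒜 (Pgr (pr m)) (Pgr l)
      (hPsmul (pr m)) (hPsmul l) h0 (d m - j)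
    have key : ∀ x, f (h x) = θ' x := by
      intro x
      induction x using DirectSum.Decomposition.inductionOn (ℳ := Pgr (pr m)) with
      | zero => simp
      | add u v hu hv => rw [map_add, map_add, map_add, hu, hv]
      | homogeneous xh =>
          rename_i i
          obtain ⟨x, hx⟩ := xh
          show f (h x) = θ' x
          rw [hh_char i x hx]
          have hc := projComm (Pgr l) (Pgr m) f (fun a b => map_add f a b) (map_zero f)
            j hfhom (i + (d m - j)) (h0 x)
          rw [← hc, hfh0 x, show i + (d m - j) + j = i + d m by ring]
          exact DirectSum.decompose_of_mem_same _ (hθ'hom i x hx)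
    exact ⟨h, hh_hom, fun x => by rw [key x, hθ'x x]⟩
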